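/- arXiv:2005.13996 — 6 statements merged into one kernel-verified Lean document; each statement's English description precedes it below -/
import Mathlib

section
/- Suppose a single agent with m >= 2 options uses MWU with step-size eps > 0, starting from a point y^0 in the interior of Delta^m, where the payoff to option k at round t is a_k + delta_k^t with: (i) each a_k in [-1,1]; (ii) there exists alpha2 > 0 such that a_{k-1} - a_k >= alpha2 for all 2 <= k <= m; (iii) there exists 0 < delta <= alpha2/8 such that delta_k^t in [-2 delta, 2 delta] for all k, t. Let khat(t) := min{ k in [m] : y_k^t > delta/(m-1) } and T := ceil( (2/(eps (alpha2 - 4 delta))) ln((m-1)/delta) ). Then: (i) for any tau >= 0, if y^{tau+T} has more than one entry greater than delta/(m-1), then khat(tau+T) <= khat(tau) - 1; and (ii) there exists a time t <= (m-1) T such that some entry of y^t is at least 1 - delta. -/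
open MeasureTheory Filter

noncomputable def softmax {d : ℕ} (p : Fin d → ℝ) : Fin d → ℝ :=
  fun j => Real.exp (p j) / ∑ l, Real.exp (p l)

noncomputable def G {n m : ℕ} (pq : (Fin n → ℝ) × (Fin m → ℝ)) :
    (Fin n → ℝ) × (Fin m → ℝ) :=
  (softmax pq.1, softmax pq.2)

noncomputable def Cfun {n m : ℕ} (A B : Matrix (Fin n) (Fin m) ℝ)
    (x : Fin n → ℝ) (y : Fin m → ℝ) : ℝ :=
  -∑ j, ∑ k, x j * y k * (A j k - A.mulVec y j) * (B j k - B.transpose.mulVec x k)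

noncomputable def mwuStep {n m : ℕ} (A B : Matrix (Fin n) (Fin m) ℝ) (ε : ℝ)
    (xy : (Fin n → ℝ) × (Fin m → ℝ)) : (Fin n → ℝ) × (Fin m → ℝ) :=
  (fun j => xy.1 j * Real.exp (ε * A.mulVec xy.2 j) /
      ∑ l, xy.1 l * Real.exp (ε * A.mulVec xy.2 l),
   fun k => xy.2 k * Real.exp (ε * B.transpose.mulVec xy.1 k) /
      ∑ l, xy.2 l * Real.exp (ε * B.transpose.mulVec xy.1 l))

noncomputable def mwuDual {n m : ℕ} (A B : Matrix (Fin n) (Fin m) ℝ) (ε : ℝ)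
    (pq : (Fin n → ℝ) × (Fin m → ℝ)) : (Fin n → ℝ) × (Fin m → ℝ) :=
  (fun j => pq.1 j + ε * A.mulVec (softmax pq.2) j,
   fun k => pq.2 k + ε * B.transpose.mulVec (softmax pq.1) k)

def primalSpace (n m : ℕ) : Set ((Fin n → ℝ) × (Fin m → ℝ)) :=
  {xy | xy.1 ∈ stdSimplex ℝ (Fin n) ∧ xy.2 ∈ stdSimplex ℝ (Fin m)}

def primalInterior (n m : ℕ) : Set ((Fin n → ℝ) × (Fin m → ℝ)) :=
  {xy | ((∑ j, xy.1 j) = 1 ∧ ∀ j, 0 < xy.1 j) ∧ ((∑ k, xy.2 k) = 1 ∧ ∀ k, 0 < xy.2 k)}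

noncomputable def ctriv {I J : Type*} [Fintype I] [Fintype J]
    (M : Matrix I J ℝ) : ℝ :=
  ⨅ a : I → ℝ, ⨅ b : J → ℝ,
    ((⨆ jk : I × J, (M jk.1 jk.2 - a jk.1 - b jk.2)) -
     (⨅ jk : I × J, (M jk.1 jk.2 - a jk.1 - b jk.2)))

def extremalDomain {n m : ℕ} (δ : ℝ) : Set ((Fin n → ℝ) × (Fin m → ℝ)) :=
  {xy | xy ∈ primalSpace n m ∧ (∃! j, 1 - δ ≤ xy.1 j) ∧ (∃! k, 1 - δ ≤ xy.2 k)}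

def Eset {n m : ℕ} (κ : ℝ) : Set ((Fin n → ℝ) × (Fin m → ℝ)) :=
  {xy | xy ∈ primalSpace n m ∧
    (∃ j1 j2, j1 ≠ j2 ∧ κ < xy.1 j1 ∧ κ < xy.1 j2) ∧
    (∃ k1 k2, k1 ≠ k2 ∧ κ < xy.2 k1 ∧ κ < xy.2 k2)}

noncomputable def dist2 {n m : ℕ} (u w : (Fin n → ℝ) × (Fin m → ℝ)) : ℝ :=
  Real.sqrt ((∑ j, (u.1 j - w.1 j)^2) + (∑ k, (u.2 k - w.2 k)^2))

noncomputable def diam2 {n m : ℕ} (S : Set ((Fin n → ℝ) × (Fin m → ℝ))) : ℝ :=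
  sSup {d | ∃ u ∈ S, ∃ w ∈ S, d = dist2 u w}

noncomputable def omwuPairStep {n m : ℕ} (A B : Matrix (Fin n) (Fin m) ℝ) (ε : ℝ)
    (s : ((Fin n → ℝ) × (Fin m → ℝ)) × ((Fin n → ℝ) × (Fin m → ℝ))) :
    ((Fin n → ℝ) × (Fin m → ℝ)) × ((Fin n → ℝ) × (Fin m → ℝ)) :=
  ((fun j => s.1.1 j + ε * (2 * A.mulVec (softmax s.1.2) j - A.mulVec (softmax s.2.2) j),
    fun k => s.1.2 k + ε * (2 * B.transpose.mulVec (softmax s.1.1) k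
        - B.transpose.mulVec (softmax s.2.1) k)),
   s.1)

noncomputable def omwuIter {n m : ℕ} (A B : Matrix (Fin n) (Fin m) ℝ) (ε : ℝ)
    (t : ℕ) (pq : (Fin n → ℝ) × (Fin m → ℝ)) : (Fin n → ℝ) × (Fin m → ℝ) :=
  ((omwuPairStep A B ε)^[t] (pq, pq)).2

noncomputable def gameValue {n m : ℕ} (A : Matrix (Fin n) (Fin m) ℝ) : ℝ :=
  ⨆ x ∈ stdSimplex ℝ (Fin n), ⨅ y ∈ stdSimplex ℝ (Fin m), ∑ j, ∑ k, x j * A j k * y k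

def subTrivSet {n m : ℕ} (A : Matrix (Fin n) (Fin m) ℝ) : Set ℝ :=
  {r | ∃ j1 j2 : Fin n, ∃ k1 k2 : Fin m, j1 ≠ j2 ∧ k1 ≠ k2 ∧
    r = ctriv (A.submatrix ![j1, j2] ![k1, k2])}

def entryGapSet {n m : ℕ} (A : Matrix (Fin n) (Fin m) ℝ) : Set ℝ :=
  {r | (∃ j : Fin n, ∃ k1 k2 : Fin m, k1 ≠ k2 ∧ r = |A j k1 - A j k2|) ∨
       (∃ j1 j2 : Fin n, ∃ k : Fin m, j1 ≠ j2 ∧ r = |A j1 k - A j2 k|)}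

/-- Single-agent MWU becomes single-minded (Lemma on extremism). -/
theorem mwu_single_agent_single_minded
    (m : ℕ) (hm : 2 ≤ m) (ε : ℝ) (hε : 0 < ε)
    (a : Fin m → ℝ) (ha : ∀ k, a k ∈ Set.Icc (-1 : ℝ) 1)
    (α2 : ℝ) (hα2 : 0 < α2)
    (hgap : ∀ k : Fin m, ∀ h : (k : ℕ) + 1 < m, α2 ≤ a k - a ⟨(k : ℕ) + 1, h⟩)
    (δ : ℝ) (hδ0 : 0 < δ) (hδ : δ ≤ α2 / 8)
    (pert : ℕ → Fin m → ℝ)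
    (hpert : ∀ t k, pert t k ∈ Set.Icc (-(2 * δ)) (2 * δ))
    (y : ℕ → Fin m → ℝ)
    (hy0 : (∑ k, y 0 k) = 1 ∧ ∀ k, 0 < y 0 k)
    (hupd : ∀ t k, y (t + 1) k =
      y t k * Real.exp (ε * (a k + pert t k)) /
        ∑ l, y t l * Real.exp (ε * (a l + pert t l)))
    (khat : ℕ → ℕ)
    (hkhat : ∀ t, khat t = sInf {k : ℕ | ∃ h : k < m, δ / ((m : ℝ) - 1) < y t ⟨k, h⟩})
    (T : ℕ)
    (hT : T = ⌈(2 / (ε * (α2 - 4 * δ))) * Real.log (((m : ℝ) - 1) / δ)⌉₊) :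
    (∀ τ : ℕ,
      (∃ k1 k2 : Fin m, k1 ≠ k2 ∧ δ / ((m : ℝ) - 1) < y (τ + T) k1 ∧
          δ / ((m : ℝ) - 1) < y (τ + T) k2) →
      khat (τ + T) + 1 ≤ khat τ) ∧
    (∃ t ≤ (m - 1) * T, ∃ k : Fin m, 1 - δ ≤ y t k) := by
  have hm2 : (2:ℝ) ≤ (m:ℝ) := by exact_mod_cast hm
  have hm1pos : (0:ℝ) < (m:ℝ) - 1 := by linarith
  set κ : ℝ := δ / ((m:ℝ) - 1) with hκdef
  have hα2le : α2 ≤ 2 := by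
    have h01 : (0:ℕ) + 1 < m := by omega
    have hg := hgap ⟨0, by omega⟩ (by simpa using h01)
    have h0 := ha ⟨0, by omega⟩
    have h1 := ha ⟨0+1, by simpa using h01⟩
    simp only [Set.mem_Icc] at h0 h1
    linarith [hg, h0.2, h1.1]
  have hδ4 : δ ≤ 1/4 := le_trans hδ (by linarith)
  have hκpos : 0 < κ := div_pos hδ0 hm1pos
  have hκδ : ((m:ℝ) - 1) * κ = δ := by
    rw [hκdef]; field_simp
  haveI : Nonempty (Fin m) := ⟨⟨0, by omega⟩⟩
  have hmκ : (m:ℝ) * κ < 1 := by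
    rw [hκdef, ← mul_div_assoc, div_lt_one hm1pos]
    nlinarith
  set c : ℝ := ε * (α2 - 4 * δ) with hcdef
  have hc : 0 < c := by
    apply mul_pos hε; linarith
  have hpos : ∀ t k, 0 < y t k := by
    intro t
    induction t with
    | zero => exact hy0.2
    | succ t ih =>
      intro k
      rw [hupd]
      exact div_pos (mul_pos (ih k) (Real.exp_pos _))
        (Finset.sum_pos (fun l _ => mul_pos (ih l) (Real.exp_pos _)) Finset.univ_nonempty)
  have hD : ∀ t, 0 < ∑ l, y t l * Real.exp (ε * (a l + pert t l)) :=
    fun t => Finset.sum_pos (fun l _ => mul_pos (hpos t l) (Real.exp_pos _)) Finset.univ_nonempty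
  have hsum : ∀ t, ∑ k, y t k = 1 := by
    intro t
    induction t with
    | zero => exact hy0.1
    | succ t ih =>
      simp only [hupd, ← Finset.sum_div]
      exact div_self (hD t).ne'
  have hle1 : ∀ t k, y t k ≤ 1 := by
    intro t k
    rw [← hsum t]
    exact Finset.single_le_sum (fun l _ => (hpos t l).le) (Finset.mem_univ k)
  have hanti : ∀ i j : ℕ, ∀ hi : i < m, ∀ hj : j < m, i ≤ j → a ⟨j, hj⟩ ≤ a ⟨i, hi⟩ := by
    intro i j
    induction j with
    | zero =>
      intro hi hj hij
      have h0 : i = 0 := Nat.le_zero.mp hij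
      subst h0
      exact le_refl _
    | succ j ihj =>
      intro hi hj hij
      rcases Nat.lt_or_ge i (j+1) with h | h
      · have hjm : j < m := by omega
        have h1 := hgap ⟨j, hjm⟩ (by simpa using hj)
        have h2 := ihj hi hjm (by omega)
        simp only at h1 h2 ⊢
        linarith
      · have he : i = j + 1 := by omega
        subst he; exact le_refl _
  have hgap' : ∀ k l : Fin m, (k:ℕ) < (l:ℕ) → a l + α2 ≤ a k := by
    intro k l hkl
    have hk1 : (k:ℕ) + 1 < m := by omega
    have h1 := hgap k hk1
    have h2 := hanti ((k:ℕ)+1) (l:ℕ) hk1 l.isLt hkl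
    have h3 : a l ≤ a ⟨(k:ℕ)+1, hk1⟩ := by simpa [Fin.eta] using h2
    linarith
  have hstep : ∀ t, ∀ k l : Fin m, (k:ℕ) < (l:ℕ) →
      y (t+1) l * y t k ≤ y (t+1) k * y t l * Real.exp (-c) := by
    intro t k l hkl
    have hpk := hpert t k
    have hpl := hpert t l
    simp only [Set.mem_Icc] at hpk hpl
    have hE : Real.exp (ε * (a l + pert t l)) ≤
        Real.exp (ε * (a k + pert t k)) * Real.exp (-c) := by
      rw [← Real.exp_add, Real.exp_le_exp, hcdef]
      have hg := hgap' k l hkl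
      nlinarith [hpk.1, hpk.2, hpl.1, hpl.2, hε.le]
    rw [hupd t l, hupd t k, div_mul_eq_mul_div, div_mul_eq_mul_div, div_mul_eq_mul_div]
    rw [div_le_div_iff_of_pos_right (hD t)]
    calc y t l * Real.exp (ε * (a l + pert t l)) * y t k
        = (y t k * y t l) * Real.exp (ε * (a l + pert t l)) := by ring
      _ ≤ (y t k * y t l) * (Real.exp (ε * (a k + pert t k)) * Real.exp (-c)) :=
          mul_le_mul_of_nonneg_left hE (mul_pos (hpos t k) (hpos t l)).le
      _ = y t k * Real.exp (ε * (a k + pert t k)) * y t l * Real.exp (-c) := by ring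
  have hiter : ∀ t s : ℕ, ∀ k l : Fin m, (k:ℕ) < (l:ℕ) →
      y (t+s) l * y t k ≤ y (t+s) k * y t l * Real.exp (-(c * s)) := by
    intro t s k l hkl
    induction s with
    | zero => simp [mul_comm]
    | succ s ih =>
      have A := hstep (t+s) k l hkl
      have B := ih
      push_cast
      have key : y (t+(s+1)) l * y t k * y (t+s) k ≤
          (y (t+(s+1)) k * y t l * Real.exp (-(c * (s+1)))) * y (t+s) k := by
        have e1 : Real.exp (-(c * ((s:ℝ)+1))) = Real.exp (-(c * s)) * Real.exp (-c) := by
          rw [← Real.exp_add]; ring_nf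
        calc y (t+(s+1)) l * y t k * y (t+s) k
            = (y (t+s+1) l * y (t+s) k) * y t k := by rw [show t+(s+1) = t+s+1 by ring]; ring
          _ ≤ (y (t+s+1) k * y (t+s) l * Real.exp (-c)) * y t k :=
              mul_le_mul_of_nonneg_right A (hpos t k).le
          _ = (y (t+s) l * y t k) * (y (t+s+1) k * Real.exp (-c)) := by ring
          _ ≤ (y (t+s) k * y t l * Real.exp (-(c*s))) * (y (t+s+1) k * Real.exp (-c)) :=
              mul_le_mul_of_nonneg_right B (mul_pos (hpos (t+s+1) k) (Real.exp_pos _)).le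
          _ = (y (t+(s+1)) k * y t l * (Real.exp (-(c*s)) * Real.exp (-c))) * y (t+s) k := by
              rw [show t+(s+1) = t+s+1 by ring]; ring
          _ = (y (t+(s+1)) k * y t l * Real.exp (-(c * ((s:ℝ)+1)))) * y (t+s) k := by
              rw [e1]
      exact le_of_mul_le_mul_right key (hpos (t+s) k)
  have hTb : Real.exp (-(c * T)) ≤ κ^2 := by
    set L : ℝ := Real.log (((m:ℝ) - 1) / δ) with hLdef
    have hx : (0:ℝ) < ((m:ℝ) - 1) / δ := div_pos hm1pos hδ0
    have hRT : (2 / c) * L ≤ (T:ℝ) := by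
      rw [hT]; exact Nat.le_ceil _
    have h2L : 2 * L ≤ c * T := by
      have := mul_le_mul_of_nonneg_left hRT hc.le
      calc 2 * L = c * ((2/c) * L) := by field_simp
        _ ≤ c * T := this
    have hκinv : κ = (((m:ℝ) - 1) / δ)⁻¹ := by
      rw [hκdef, inv_div]
    calc Real.exp (-(c * T)) ≤ Real.exp (-(2 * L)) := by
          rw [Real.exp_le_exp]; linarith
      _ = Real.exp (-L) * Real.exp (-L) := by rw [← Real.exp_add]; ring_nf
      _ = κ * κ := by rw [Real.exp_neg, Real.exp_log hx, ← hκinv]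
      _ = κ^2 := by ring
  have hkill : ∀ τ, ∀ k l : Fin m, (k:ℕ) < (l:ℕ) → κ < y τ k → y (τ+T) l ≤ κ := by
    intro τ k l hkl hbig
    have H := hiter τ T k l hkl
    have H2 : y (τ+T) k * y τ l * Real.exp (-(c * T)) ≤ κ^2 := by
      calc y (τ+T) k * y τ l * Real.exp (-(c * T))
          ≤ 1 * 1 * κ^2 := by
            apply mul_le_mul (mul_le_mul (hle1 _ _) (hle1 _ _) (hpos _ _).le zero_le_one)
              hTb (Real.exp_pos _).le (by norm_num)
        _ = κ^2 := by ring
    have H3 : y (τ+T) l * y τ k ≤ κ * y τ k := by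
      have : κ^2 ≤ κ * y τ k := by nlinarith
      linarith
    exact le_of_mul_le_mul_right H3 (lt_trans hκpos hbig)
  have hbigfin : ∀ t, ∃ k : Fin m, κ < y t k := by
    intro t
    have hlt : ∑ _k : Fin m, κ < ∑ k, y t k := by
      rw [hsum t, Finset.sum_const, Finset.card_univ, Fintype.card_fin, nsmul_eq_mul]
      exact hmκ
    obtain ⟨k, _, hk⟩ := Finset.exists_lt_of_sum_lt hlt
    exact ⟨k, hk⟩
  have hbigset : ∀ t, {k : ℕ | ∃ h : k < m, κ < y t ⟨k, h⟩}.Nonempty := by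
    intro t
    obtain ⟨k, hk⟩ := hbigfin t
    exact ⟨(k:ℕ), k.isLt, by simpa [Fin.eta] using hk⟩
  have hkhat_mem : ∀ t, ∃ h : khat t < m, κ < y t ⟨khat t, h⟩ := by
    intro t
    have := Nat.sInf_mem (hbigset t)
    rw [← hkhat t] at this
    exact this
  have hkhat_le : ∀ t, ∀ k : Fin m, κ < y t k → khat t ≤ (k:ℕ) := by
    intro t k hk
    rw [hkhat t]
    exact Nat.sInf_le ⟨k.isLt, by simpa [Fin.eta] using hk⟩
  -- Part 1
  have part1 : ∀ τ : ℕ,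
      (∃ k1 k2 : Fin m, k1 ≠ k2 ∧ κ < y (τ + T) k1 ∧ κ < y (τ + T) k2) →
      khat (τ + T) + 1 ≤ khat τ := by
    intro τ ⟨k1, k2, hne, h1, h2⟩
    obtain ⟨hkm, hkbig⟩ := hkhat_mem τ
    set k0 : Fin m := ⟨khat τ, hkm⟩ with hk0
    have hub : ∀ k : Fin m, κ < y (τ + T) k → (k:ℕ) ≤ khat τ := by
      intro k hk
      by_contra hgt
      push_neg at hgt
      have : y (τ+T) k ≤ κ := hkill τ k0 k (by simpa [hk0] using hgt) hkbig
      linarith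
    have hub1 := hub k1 h1
    have hub2 := hub k2 h2
    have hne' : (k1:ℕ) ≠ (k2:ℕ) := fun h => hne (Fin.ext h)
    have hmin : min (k1:ℕ) (k2:ℕ) + 1 ≤ khat τ := by omega
    have hlow : khat (τ+T) ≤ min (k1:ℕ) (k2:ℕ) := by
      rcases le_total (k1:ℕ) (k2:ℕ) with h | h
      · rw [min_eq_left h]; exact hkhat_le _ k1 h1
      · rw [min_eq_right h]; exact hkhat_le _ k2 h2
    omega
  refine ⟨part1, ?_⟩
  -- Part 2
  by_contra hcon
  push_neg at hcon
  have htwo : ∀ t ≤ (m-1) * T, ∃ k1 k2 : Fin m, k1 ≠ k2 ∧ κ < y t k1 ∧ κ < y t k2 := by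
    intro t ht
    obtain ⟨k1, hk1⟩ := hbigfin t
    by_contra hno
    push_neg at hno
    have hall : ∀ k : Fin m, k ≠ k1 → y t k ≤ κ := by
      intro k hk
      by_contra hbig
      push_neg at hbig
      exact absurd hbig (by simpa using hno k1 k (Ne.symm hk) hk1)
    have hsmall : ∑ k ∈ Finset.univ.erase k1, y t k ≤ ((m:ℝ) - 1) * κ := by
      have hcard : (Finset.univ.erase k1).card = m - 1 := by
        rw [Finset.card_erase_of_mem (Finset.mem_univ _), Finset.card_univ, Fintype.card_fin]
      calc ∑ k ∈ Finset.univ.erase k1, y t k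
          ≤ (Finset.univ.erase k1).card • κ :=
            Finset.sum_le_card_nsmul _ _ κ (fun k hk => hall k (Finset.ne_of_mem_erase hk))
        _ = ((m:ℝ) - 1) * κ := by
            rw [hcard, nsmul_eq_mul, Nat.cast_sub (by omega), Nat.cast_one]
    have hsplit : y t k1 + ∑ k ∈ Finset.univ.erase k1, y t k = 1 := by
      rw [Finset.add_sum_erase _ _ (Finset.mem_univ k1)]
      exact hsum t
    have : 1 - δ ≤ y t k1 := by rw [hκδ] at hsmall; linarith
    exact absurd this (not_le.mpr (hcon t ht k1))
  have hdec : ∀ j : ℕ, j ≤ m - 1 → khat (j * T) + j + 2 ≤ m := by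
    intro j
    induction j with
    | zero =>
      intro _
      obtain ⟨k1, k2, hne, h1, h2⟩ := htwo 0 (Nat.zero_le _)
      have hl1 := hkhat_le 0 k1 (by simpa using h1)
      have hl2 := hkhat_le 0 k2 (by simpa using h2)
      have hne' : (k1:ℕ) ≠ (k2:ℕ) := fun h => hne (Fin.ext h)
      have := k1.isLt
      have := k2.isLt
      simp only [Nat.zero_mul] at *
      omega
    | succ j ihj =>
      intro hj
      have hjle : j ≤ m - 1 := by omega
      have IH := ihj hjle
      have hle' : (j+1) * T ≤ (m-1) * T := Nat.mul_le_mul_right T hj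
      obtain ⟨k1, k2, hne, h1, h2⟩ := htwo ((j+1) * T) hle'
      have heq : (j+1) * T = j * T + T := by ring
      rw [heq] at h1 h2
      have := part1 (j * T) ⟨k1, k2, hne, h1, h2⟩
      rw [heq]
      omega
  have hfin := hdec (m - 1) (le_refl _)
  omega
end

section
/- Let (A,-A) be a two-person zero-sum game with entries of A in [-1,1] such that every 2x2 submatrix of A is non-trivial, and let alpha1 > 0 be the minimum of the distance from triviality c(A') over all 2x2 submatrices A' of A. Then for any 0 < kappa < 1/2 and every (x,y) in E^kappa_{2,2}, one has C_{(A,-A)}(x,y) >= kappa^2 alpha1^2 / 2; in particular E^kappa_{2,2} is uncontrollable. -/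
open MeasureTheory Filter

section EsetAux

lemma four_sq_aux (a b c e : ℝ) : (a - b - c + e)^2 / 4 ≤ a^2 + b^2 + c^2 + e^2 := by
  nlinarith [sq_nonneg (a + b), sq_nonneg (a + c), sq_nonneg (b + e), sq_nonneg (c + e),
    sq_nonneg (a - e), sq_nonneg (b - c)]

lemma supinf_nonneg' (f : Fin 2 × Fin 2 → ℝ) : (0:ℝ) ≤ (⨆ p, f p) - (⨅ p, f p) := by
  have hb : BddAbove (Set.range f) := Set.Finite.bddAbove (Set.finite_range f)
  have hb' : BddBelow (Set.range f) := Set.Finite.bddBelow (Set.finite_range f)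
  have h1 := le_ciSup hb ((0,0) : Fin 2 × Fin 2)
  have h2 := ciInf_le hb' ((0,0) : Fin 2 × Fin 2)
  linarith

lemma ctriv_le_half' (M : Matrix (Fin 2) (Fin 2) ℝ) :
    ctriv M ≤ |M 0 0 - M 0 1 - M 1 0 + M 1 1| / 2 := by
  set d := M 0 0 - M 0 1 - M 1 0 + M 1 1 with hd
  set a : Fin 2 → ℝ := ![M 0 0 - d/4, M 1 0 + d/4] with ha
  set b : Fin 2 → ℝ := ![0, M 0 1 - M 0 0 + d/2] with hb
  have habs : ∀ p : Fin 2 × Fin 2, |M p.1 p.2 - a p.1 - b p.2| ≤ |d| / 4 := by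
    rintro ⟨i, j⟩
    fin_cases i <;> fin_cases j <;>
      simp only [ha, hb, Fin.mk_zero, Fin.mk_one, Matrix.cons_val_zero, Matrix.cons_val_one,
        Matrix.head_cons] <;>
      rw [abs_le] <;> constructor <;>
      cases abs_cases d with
      | inl h => rw [h.1]; linarith [h.2]
      | inr h => rw [h.1]; linarith [h.2]
  have hsup : (⨆ p : Fin 2 × Fin 2, (M p.1 p.2 - a p.1 - b p.2)) ≤ |d|/4 :=
    ciSup_le fun p => (abs_le.mp (habs p)).2
  have hinf : -(|d|/4) ≤ (⨅ p : Fin 2 × Fin 2, (M p.1 p.2 - a p.1 - b p.2)) :=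
    le_ciInf fun p => (abs_le.mp (habs p)).1
  have houter : BddBelow (Set.range fun a : Fin 2 → ℝ =>
      ⨅ b : Fin 2 → ℝ, ((⨆ jk : Fin 2 × Fin 2, (M jk.1 jk.2 - a jk.1 - b jk.2)) -
        (⨅ jk : Fin 2 × Fin 2, (M jk.1 jk.2 - a jk.1 - b jk.2)))) := by
    refine ⟨0, ?_⟩
    rintro _ ⟨a', rfl⟩
    exact le_ciInf fun b' => supinf_nonneg' _
  have hinner : BddBelow (Set.range fun b' : Fin 2 → ℝ =>
      ((⨆ jk : Fin 2 × Fin 2, (M jk.1 jk.2 - a jk.1 - b' jk.2)) -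
        (⨅ jk : Fin 2 × Fin 2, (M jk.1 jk.2 - a jk.1 - b' jk.2)))) := by
    refine ⟨0, ?_⟩
    rintro _ ⟨b', rfl⟩
    exact supinf_nonneg' _
  calc ctriv M ≤ ⨅ b' : Fin 2 → ℝ, ((⨆ jk : Fin 2 × Fin 2, (M jk.1 jk.2 - a jk.1 - b' jk.2)) -
        (⨅ jk : Fin 2 × Fin 2, (M jk.1 jk.2 - a jk.1 - b' jk.2))) := ciInf_le houter a
    _ ≤ ((⨆ jk : Fin 2 × Fin 2, (M jk.1 jk.2 - a jk.1 - b jk.2)) -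
        (⨅ jk : Fin 2 × Fin 2, (M jk.1 jk.2 - a jk.1 - b jk.2))) := ciInf_le hinner b
    _ ≤ |d|/2 := by linarith

lemma Cfun_eq_sq {n m : ℕ} (A : Matrix (Fin n) (Fin m) ℝ) (x : Fin n → ℝ) (y : Fin m → ℝ)
    (hx : ∑ j, x j = 1) (hy : ∑ k, y k = 1) :
    Cfun A (-A) x y = ∑ j, ∑ k, x j * y k *
      (A j k - A.mulVec y j - A.transpose.mulVec x k + ∑ l, x l * A.mulVec y l)^2 := by
  set r : Fin n → ℝ := A.mulVec y with hr
  set c : Fin m → ℝ := A.transpose.mulVec x with hc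
  set v : ℝ := ∑ l, x l * r l with hv
  set u : Fin n → Fin m → ℝ := fun j k => A j k - r j - c k + v with hu
  have hrj : ∀ j, ∑ k, y k * A j k = r j := by
    intro j
    rw [hr]
    simp [Matrix.mulVec, dotProduct, mul_comm]
  have hck : ∀ k, ∑ j, x j * A j k = c k := by
    intro k
    rw [hc]
    simp [Matrix.mulVec, dotProduct, Matrix.transpose_apply, mul_comm]
  have hvc : ∑ k, y k * c k = v := by
    rw [hv]
    have : ∀ j, x j * r j = ∑ k, x j * (A j k * y k) := by
      intro j; rw [hr, Matrix.mulVec, dotProduct, Finset.mul_sum]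
    rw [Finset.sum_congr rfl fun j _ => this j, Finset.sum_comm]
    refine Finset.sum_congr rfl fun k _ => ?_
    rw [← hck k, Finset.mul_sum]
    exact Finset.sum_congr rfl fun j _ => by ring
  have hrow : ∀ j, ∑ k, y k * u j k = 0 := by
    intro j
    have : ∀ k, y k * u j k = y k * A j k - y k * r j - y k * c k + y k * v := by
      intro k; rw [hu]; ring
    rw [Finset.sum_congr rfl fun k _ => this k]
    rw [Finset.sum_add_distrib, Finset.sum_sub_distrib, Finset.sum_sub_distrib,
      hrj j, ← Finset.sum_mul, ← Finset.sum_mul, hy, hvc]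
    ring
  have hcol : ∀ k, ∑ j, x j * u j k = 0 := by
    intro k
    have : ∀ j, x j * u j k = x j * A j k - x j * r j - x j * c k + x j * v := by
      intro j; rw [hu]; ring
    rw [Finset.sum_congr rfl fun j _ => this j]
    rw [Finset.sum_add_distrib, Finset.sum_sub_distrib, Finset.sum_sub_distrib,
      hck k, ← hv, ← Finset.sum_mul, ← Finset.sum_mul, hx]
    ring
  have h0 : Cfun A (-A) x y
      = ∑ j, ∑ k, x j * y k * (A j k - r j) * (A j k - c k) := by
    rw [Cfun]
    rw [← Finset.sum_neg_distrib]
    refine Finset.sum_congr rfl fun j _ => ?_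
    rw [← Finset.sum_neg_distrib]
    refine Finset.sum_congr rfl fun k _ => ?_
    simp only [Matrix.neg_apply, Matrix.transpose_neg, Matrix.neg_mulVec, Pi.neg_apply, ← hc]
    ring
  rw [h0]
  have hsplit : ∀ j k, x j * y k * (A j k - r j) * (A j k - c k)
      = x j * y k * (u j k)^2 + (x j * (r j - v)) * (y k * u j k)
        + (x j * u j k) * (y k * (c k - v)) + (x j * (r j - v)) * (y k * (c k - v)) := by
    intro j k; rw [hu]; ring
  rw [Finset.sum_congr rfl fun j _ => Finset.sum_congr rfl fun k _ => hsplit j k]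
  have hT2 : ∀ j, ∑ k, (x j * (r j - v)) * (y k * u j k) = 0 := by
    intro j; rw [← Finset.mul_sum, hrow j, mul_zero]
  have hT4 : ∀ j, ∑ k, (x j * (r j - v)) * (y k * (c k - v)) = 0 := by
    intro j
    rw [← Finset.mul_sum]
    have : ∑ k, y k * (c k - v) = 0 := by
      have : ∀ k, y k * (c k - v) = y k * c k - y k * v := fun k => by ring
      rw [Finset.sum_congr rfl fun k _ => this k, Finset.sum_sub_distrib, hvc,
        ← Finset.sum_mul, hy]
      ring
    rw [this, mul_zero]
  have hT3 : ∑ j, ∑ k, (x j * u j k) * (y k * (c k - v)) = 0 := by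
    rw [Finset.sum_comm]
    refine Finset.sum_eq_zero fun k _ => ?_
    have : ∀ j, (x j * u j k) * (y k * (c k - v)) = (y k * (c k - v)) * (x j * u j k) :=
      fun j => by ring
    rw [Finset.sum_congr rfl fun j _ => this j, ← Finset.mul_sum, hcol k, mul_zero]
  have expand : ∀ j, ∑ k, (x j * y k * (u j k)^2 + (x j * (r j - v)) * (y k * u j k)
        + (x j * u j k) * (y k * (c k - v)) + (x j * (r j - v)) * (y k * (c k - v)))
      = (∑ k, x j * y k * (u j k)^2) + (∑ k, (x j * u j k) * (y k * (c k - v))) := by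
    intro j
    rw [Finset.sum_add_distrib, Finset.sum_add_distrib, Finset.sum_add_distrib,
      hT2 j, hT4 j]
    ring
  rw [Finset.sum_congr rfl fun j _ => expand j, Finset.sum_add_distrib, hT3, add_zero]

end EsetAux

/-- E^kappa_{2,2} is uncontrollable in non-2x2-trivial zero-sum games. -/
theorem Eset_uncontrollable
    (n m : ℕ) (hn : 2 ≤ n) (hm : 2 ≤ m)
    (A : Matrix (Fin n) (Fin m) ℝ) (hA : ∀ j k, A j k ∈ Set.Icc (-1 : ℝ) 1)
    (α1 : ℝ) (hα1 : IsLeast (subTrivSet A) α1) (hα1pos : 0 < α1)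
    (κ : ℝ) (hκ0 : 0 < κ) (hκ : κ < 1 / 2) :
    ∀ xy ∈ Eset (n := n) (m := m) κ, κ^2 * α1^2 / 2 ≤ Cfun A (-A) xy.1 xy.2 := by
  rintro ⟨x, y⟩ ⟨⟨hxS, hyS⟩, ⟨j1, j2, hj12, hxj1, hxj2⟩, ⟨k1, k2, hk12, hyk1, hyk2⟩⟩
  have hx1 : ∑ j, x j = 1 := hxS.2
  have hy1 : ∑ k, y k = 1 := hyS.2
  set r : Fin n → ℝ := A.mulVec y with hr
  set c : Fin m → ℝ := A.transpose.mulVec x with hc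
  set v : ℝ := ∑ l, x l * r l with hv
  set U : Fin n → Fin m → ℝ := fun j k => A j k - r j - c k + v with hU
  have hCeq : Cfun A (-A) x y = ∑ j, ∑ k, x j * y k * (U j k)^2 :=
    Cfun_eq_sq A x y hx1 hy1
  -- restrict the sum to the four distinguished entries
  set f : Fin n × Fin m → ℝ := fun p => x p.1 * y p.2 * (U p.1 p.2)^2 with hf
  have hfnonneg : ∀ p : Fin n × Fin m, 0 ≤ f p := fun p =>
    mul_nonneg (mul_nonneg (hxS.1 p.1) (hyS.1 p.2)) (sq_nonneg _)
  have hCeq' : Cfun A (-A) x y = ∑ p : Fin n × Fin m, f p := by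
    rw [hCeq, Fintype.sum_prod_type]
  set s : Finset (Fin n × Fin m) := {(j1,k1), (j1,k2), (j2,k1), (j2,k2)} with hs
  have hsum_le : ∑ p ∈ s, f p ≤ ∑ p : Fin n × Fin m, f p :=
    Finset.sum_le_sum_of_subset_of_nonneg (Finset.subset_univ s)
      (fun p _ _ => hfnonneg p)
  have hssum : ∑ p ∈ s, f p = f (j1,k1) + f (j1,k2) + f (j2,k1) + f (j2,k2) := by
    rw [hs]
    rw [Finset.sum_insert (by simp [Prod.ext_iff, hj12, hk12]),
        Finset.sum_insert (by simp [Prod.ext_iff, hj12, hk12]),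
        Finset.sum_insert (by simp [Prod.ext_iff, hj12, hk12]),
        Finset.sum_singleton]
    ring
  -- relate to the 2x2 submatrix distance from triviality
  have hmem : ctriv (A.submatrix ![j1, j2] ![k1, k2]) ∈ subTrivSet A :=
    ⟨j1, j2, k1, k2, hj12, hk12, rfl⟩
  have hle1 : α1 ≤ ctriv (A.submatrix ![j1, j2] ![k1, k2]) := hα1.2 hmem
  have hle2 := ctriv_le_half' (A.submatrix ![j1, j2] ![k1, k2])
  set d : ℝ := A j1 k1 - A j1 k2 - A j2 k1 + A j2 k2 with hd
  have hMd : (A.submatrix ![j1, j2] ![k1, k2]) 0 0 - (A.submatrix ![j1, j2] ![k1, k2]) 0 1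
      - (A.submatrix ![j1, j2] ![k1, k2]) 1 0 + (A.submatrix ![j1, j2] ![k1, k2]) 1 1 = d := by
    simp [Matrix.submatrix_apply, hd]
  rw [hMd] at hle2
  have habs : 2 * α1 ≤ |d| := by linarith
  have hd2 : 4 * α1^2 ≤ d^2 := by
    nlinarith [sq_abs d, abs_nonneg d, hα1pos.le]
  -- Cauchy-Schwarz on the four entries
  have hdU : d = U j1 k1 - U j1 k2 - U j2 k1 + U j2 k2 := by
    rw [hU, hd]; ring
  have hCS : d^2 / 4 ≤ (U j1 k1)^2 + (U j1 k2)^2 + (U j2 k1)^2 + (U j2 k2)^2 := by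
    rw [hdU]
    exact four_sq_aux _ _ _ _
  -- each of the four entries has weight at least κ^2
  have hw : ∀ (j : Fin n) (k : Fin m), κ < x j → κ < y k →
      κ^2 * (U j k)^2 ≤ f (j, k) := by
    intro j k hxj hyk
    have : κ^2 ≤ x j * y k := by
      rw [sq]
      exact mul_le_mul hxj.le hyk.le hκ0.le (hκ0.trans hxj).le
    exact mul_le_mul_of_nonneg_right this (sq_nonneg _)
  clear hU hf hd hr hc hv hs hCeq hMd hdU
  clear_value U f d s r c v
  have hbig : κ^2 * (d^2/4) ≤ ∑ p ∈ s, f p := by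
    rw [hssum]
    have h11 := hw j1 k1 hxj1 hyk1
    have h12 := hw j1 k2 hxj1 hyk2
    have h21 := hw j2 k1 hxj2 hyk1
    have h22 := hw j2 k2 hxj2 hyk2
    have hmul := mul_le_mul_of_nonneg_left hCS (sq_nonneg κ)
    have hexp : κ^2 * ((U j1 k1)^2 + (U j1 k2)^2 + (U j2 k1)^2 + (U j2 k2)^2)
        = κ^2*(U j1 k1)^2 + κ^2*(U j1 k2)^2 + κ^2*(U j2 k1)^2 + κ^2*(U j2 k2)^2 := by ring
    linarith
  have hfinal : κ^2 * α1^2 ≤ κ^2 * (d^2/4) :=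
    mul_le_mul_of_nonneg_left (by linarith) (sq_nonneg κ)
  have : κ^2 * α1^2 / 2 ≤ κ^2 * α1^2 := by
    have h := mul_nonneg (sq_nonneg κ) (sq_nonneg α1)
    linarith
  calc κ^2 * α1^2 / 2 ≤ κ^2 * α1^2 := this
    _ ≤ κ^2 * (d^2/4) := hfinal
    _ ≤ ∑ p ∈ s, f p := hbig
    _ ≤ ∑ p : Fin n × Fin m, f p := hsum_le
    _ = Cfun A (-A) x y := hCeq'.symm
end

section
/- For z > 0, define the set S(z) = { (p,q) in R^2 x R^2 : |p_1| <= 1/z, |q_1| <= 1/z, |p_2| <= sqrt(z), |q_2| <= sqrt(z) }. Then the Lebesgue volume of S(z) equals 16/z, which tends to 0 as z tends to infinity, while the l2-diameter of the primal image G(S(z)) tends to 2 as z tends to infinity (G(S(z)) contains points converging to ((0,1),(0,1)) and to ((1,0),(1,0))). Hence volume contraction in the dual space does not imply that the primal image has small diameter. -/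
open MeasureTheory Filter

private lemma sqrt_tendsto_atTop' : Tendsto Real.sqrt atTop atTop := by
  refine tendsto_atTop_atTop.2 fun b => ⟨(max b 0)^2, fun a ha => ?_⟩
  calc b ≤ max b 0 := le_max_left _ _
  _ = Real.sqrt ((max b 0)^2) := by rw [Real.sqrt_sq (le_max_right _ _)]
  _ ≤ Real.sqrt a := Real.sqrt_le_sqrt ha

private lemma softmax_nonneg' (p : Fin 2 → ℝ) (j : Fin 2) : 0 ≤ softmax p j := by
  unfold softmax
  have : (0:ℝ) < ∑ l, Real.exp (p l) := by
    rw [Fin.sum_univ_two]; positivity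
  positivity

private lemma softmax_sum_pos' (p : Fin 2 → ℝ) : 0 < ∑ l, Real.exp (p l) := by
  rw [Fin.sum_univ_two]; positivity

private lemma softmax_le_one' (p : Fin 2 → ℝ) (j : Fin 2) : softmax p j ≤ 1 := by
  unfold softmax
  rw [div_le_one (softmax_sum_pos' p)]
  exact Finset.single_le_sum (fun i _ => (Real.exp_pos _).le) (Finset.mem_univ j)

private lemma softmax_one_eq' (p : Fin 2 → ℝ) : softmax p (1:Fin 2) = 1 - softmax p 0 := by
  unfold softmax
  rw [Fin.sum_univ_two]
  have h : Real.exp (p 0) + Real.exp (p 1) ≠ 0 := by positivity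
  field_simp
  ring

private lemma dist2_GG' (p q : Fin 2 → ℝ) :
    dist2 (G (p,p)) (G (q,q)) = 2 * |softmax p 0 - softmax q 0| := by
  unfold dist2 G
  simp only [Fin.sum_univ_two]
  rw [softmax_one_eq' p, softmax_one_eq' q]
  rw [show ((softmax p 0 - softmax q 0)^2 + (1 - softmax p 0 - (1 - softmax q 0))^2) +
      ((softmax p 0 - softmax q 0)^2 + (1 - softmax p 0 - (1 - softmax q 0))^2)
      = (2*|softmax p 0 - softmax q 0|)^2 from by rw [mul_pow, sq_abs]; ring]
  exact Real.sqrt_sq (by positivity)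

private lemma dist2_le_two' (a b : (Fin 2 → ℝ) × (Fin 2 → ℝ)) :
    dist2 (G a) (G b) ≤ 2 := by
  unfold dist2 G
  have key : ∀ (p q : Fin 2 → ℝ) (j : Fin 2), (softmax p j - softmax q j)^2 ≤ 1 := fun p q j => by
    nlinarith [softmax_nonneg' p j, softmax_le_one' p j, softmax_nonneg' q j, softmax_le_one' q j]
  have h4 : ((∑ j, (softmax a.1 j - softmax b.1 j)^2) +
      (∑ k, (softmax a.2 k - softmax b.2 k)^2)) ≤ 4 := by
    rw [Fin.sum_univ_two, Fin.sum_univ_two]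
    linarith [key a.1 b.1 0, key a.1 b.1 1, key a.2 b.2 0, key a.2 b.2 1]
  calc Real.sqrt _ ≤ Real.sqrt 4 := Real.sqrt_le_sqrt h4
  _ = 2 := by rw [show (4:ℝ) = 2^2 by norm_num, Real.sqrt_sq (by norm_num)]

/-- Dual volume contraction does not imply small primal diameter. -/
theorem dual_contraction_not_primal_stability
    (S : ℝ → Set ((Fin 2 → ℝ) × (Fin 2 → ℝ)))
    (hS : ∀ z : ℝ, S z = {pq | |pq.1 0| ≤ 1 / z ∧ |pq.2 0| ≤ 1 / z ∧
      |pq.1 1| ≤ Real.sqrt z ∧ |pq.2 1| ≤ Real.sqrt z}) :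
    (∀ z : ℝ, 0 < z → volume (S z) = ENNReal.ofReal (16 / z)) ∧
    Tendsto (fun z : ℝ => volume (S z)) atTop (nhds 0) ∧
    Tendsto (fun z : ℝ => diam2 (G '' S z)) atTop (nhds 2) := by
  have hvol : ∀ z : ℝ, 0 < z → volume (S z) = ENNReal.ofReal (16 / z) := by
    intro z hz
    set c : Fin 2 → ℝ := ![1/z, Real.sqrt z] with hc
    have hset : S z = (Set.univ.pi fun i => Set.Icc (-(c i)) (c i)) ×ˢ
        (Set.univ.pi fun i => Set.Icc (-(c i)) (c i)) := by
      rw [hS]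
      ext ⟨p, q⟩
      simp only [Set.mem_setOf_eq, Set.mem_prod, Set.mem_pi, Set.mem_univ, true_implies,
        Set.mem_Icc, Fin.forall_fin_two, hc, Matrix.cons_val_zero, Matrix.cons_val_one,
        Matrix.head_cons, abs_le]
      tauto
    rw [hset, Measure.volume_eq_prod, Measure.prod_prod, volume_pi_pi, Fin.prod_univ_two]
    simp only [Real.volume_Icc, hc, Matrix.cons_val_zero, Matrix.cons_val_one, Matrix.head_cons]
    have ha : (0:ℝ) ≤ 1 / z - -(1 / z) := by
      have := le_of_lt (one_div_pos.mpr hz); linarith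
    have hb : (0:ℝ) ≤ Real.sqrt z - -Real.sqrt z := by
      have := Real.sqrt_nonneg z; linarith
    rw [← ENNReal.ofReal_mul ha, ← ENNReal.ofReal_mul (mul_nonneg ha hb)]
    congr 1
    have h1 : Real.sqrt z * Real.sqrt z = z := Real.mul_self_sqrt hz.le
    have hz' : z ≠ 0 := ne_of_gt hz
    field_simp
    nlinarith [h1, hz]
  refine ⟨hvol, ?_, ?_⟩
  · have h0 : Tendsto (fun z : ℝ => ENNReal.ofReal (16 / z)) atTop (nhds 0) := by
      rw [show (0 : ENNReal) = ENNReal.ofReal 0 from by simp]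
      exact ENNReal.tendsto_ofReal (Tendsto.div_atTop tendsto_const_nhds tendsto_id)
    refine Tendsto.congr' ?_ h0
    filter_upwards [eventually_gt_atTop (0:ℝ)] with z hz
    exact (hvol z hz).symm
  · set P : ℝ → (Fin 2 → ℝ) := fun z => ![-(1/z), Real.sqrt z] with hP
    set Q : ℝ → (Fin 2 → ℝ) := fun z => ![1/z, -Real.sqrt z] with hQ
    have hinv : Tendsto (fun z : ℝ => 1/z) atTop (nhds 0) := by
      simpa [one_div] using tendsto_inv_atTop_zero
    have hexp1 : Tendsto (fun z : ℝ => Real.exp (-(1/z))) atTop (nhds 1) := by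
      have hinvn : Tendsto (fun z : ℝ => -(1/z)) atTop (nhds 0) := by
        simpa using hinv.neg
      have := (Real.continuous_exp.tendsto 0).comp hinvn
      simpa [Function.comp_def] using this
    have hexp2 : Tendsto (fun z : ℝ => Real.exp (1/z)) atTop (nhds 1) := by
      have := (Real.continuous_exp.tendsto 0).comp hinv
      simpa [Function.comp_def] using this
    have hsq : Tendsto (fun z : ℝ => Real.exp (Real.sqrt z)) atTop atTop :=
      Real.tendsto_exp_atTop.comp sqrt_tendsto_atTop'
    have hnsq : Tendsto (fun z : ℝ => Real.exp (-Real.sqrt z)) atTop (nhds 0) :=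
      Real.tendsto_exp_atBot.comp (tendsto_neg_atTop_atBot.comp sqrt_tendsto_atTop')
    have hsP : ∀ z, softmax (P z) 0 =
        Real.exp (-(1/z)) / (Real.exp (-(1/z)) + Real.exp (Real.sqrt z)) := by
      intro z; unfold softmax; rw [Fin.sum_univ_two]; simp [hP]
    have hsQ : ∀ z, softmax (Q z) 0 =
        Real.exp (1/z) / (Real.exp (1/z) + Real.exp (-Real.sqrt z)) := by
      intro z; unfold softmax; rw [Fin.sum_univ_two]; simp [hQ]
    have hs : Tendsto (fun z => softmax (P z) 0) atTop (nhds 0) := by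
      refine Tendsto.congr (fun z => (hsP z).symm) ?_
      exact Tendsto.div_atTop hexp1 (hexp1.add_atTop hsq)
    have ht : Tendsto (fun z => softmax (Q z) 0) atTop (nhds 1) := by
      refine Tendsto.congr (fun z => (hsQ z).symm) ?_
      have hden : Tendsto (fun z : ℝ => Real.exp (1/z) + Real.exp (-Real.sqrt z))
          atTop (nhds 1) := by
        simpa using hexp2.add hnsq
      simpa [Pi.div_def] using Tendsto.div hexp2 hden one_ne_zero
    have hf : Tendsto (fun z => 2 * |softmax (P z) 0 - softmax (Q z) 0|) atTop (nhds 2) := by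
      have := ((hs.sub ht).abs).const_mul (2:ℝ)
      simpa using this
    refine tendsto_of_tendsto_of_tendsto_of_le_of_le' hf tendsto_const_nhds ?_ ?_
    · filter_upwards [eventually_ge_atTop (1:ℝ)] with z hz
      have hz0 : (0:ℝ) < z := lt_of_lt_of_le one_pos hz
      have hmemP : (P z, P z) ∈ S z := by
        rw [hS]
        refine ⟨?_, ?_, ?_, ?_⟩ <;>
          simp [hP, abs_of_nonneg, abs_of_nonpos, neg_nonpos, Real.sqrt_nonneg,
            abs_of_nonneg (inv_nonneg.mpr hz0.le), le_of_lt (one_div_pos.mpr hz0)]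
      have hmemQ : (Q z, Q z) ∈ S z := by
        rw [hS]
        refine ⟨?_, ?_, ?_, ?_⟩ <;>
          simp [hQ, abs_of_nonneg, abs_of_nonpos, neg_nonpos, Real.sqrt_nonneg,
            abs_of_nonneg (inv_nonneg.mpr hz0.le), le_of_lt (one_div_pos.mpr hz0)]
      have hbdd : BddAbove {d | ∃ u ∈ G '' S z, ∃ w ∈ G '' S z, d = dist2 u w} := by
        refine ⟨2, ?_⟩
        rintro d ⟨u, ⟨a, _, rfl⟩, w, ⟨b, _, rfl⟩, rfl⟩
        exact dist2_le_two' a b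
      have hmem : 2 * |softmax (P z) 0 - softmax (Q z) 0| ∈
          {d | ∃ u ∈ G '' S z, ∃ w ∈ G '' S z, d = dist2 u w} :=
        ⟨G (P z, P z), ⟨(P z, P z), hmemP, rfl⟩, G (Q z, Q z), ⟨(Q z, Q z), hmemQ, rfl⟩,
          (dist2_GG' (P z) (Q z)).symm⟩
      exact le_csSup hbdd hmem
    · filter_upwards with z
      refine Real.sSup_le ?_ (by norm_num)
      rintro d ⟨u, ⟨a, _, rfl⟩, w, ⟨b, _, rfl⟩, rfl⟩
      exact dist2_le_two' a b
end

section
/- For z > 0, define the set S(z) = { (p,q) in R^2 x R^2 : p_2 >= p_1 + z, q_2 >= q_1 + z, and 0 <= p_1, p_2, q_1, q_2 <= 3z }. Then the Lebesgue volume of S(z) equals 4 z^4, which tends to infinity as z tends to infinity, while the primal image G(S(z)) converges to the single point ((0,1),(0,1)): the supremum over (p,q) in S(z) of the l2 distance between G(p,q) and ((0,1),(0,1)) tends to 0 as z tends to infinity. Hence volume expansion in the dual space does not imply instability in the primal space. -/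
open MeasureTheory Filter

section AuxProofs

lemma tri_vol_aux (z : ℝ) (hz : 0 < z) :
    volume {ab : ℝ × ℝ | ab.1 + z ≤ ab.2 ∧ 0 ≤ ab.1 ∧ ab.1 ≤ 3*z ∧ 0 ≤ ab.2 ∧ ab.2 ≤ 3*z}
      = ENNReal.ofReal (2*z^2) := by
  have hmeas : MeasurableSet {ab : ℝ × ℝ | ab.1 + z ≤ ab.2 ∧ 0 ≤ ab.1 ∧ ab.1 ≤ 3*z ∧ 0 ≤ ab.2 ∧ ab.2 ≤ 3*z} := by
    apply IsClosed.measurableSet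
    exact (isClosed_le (continuous_fst.add continuous_const) continuous_snd).inter
      ((isClosed_le continuous_const continuous_fst).inter
      ((isClosed_le continuous_fst continuous_const).inter
      ((isClosed_le continuous_const continuous_snd).inter
      (isClosed_le continuous_snd continuous_const))))
  rw [MeasureTheory.Measure.volume_eq_prod, Measure.prod_apply hmeas]
  have hslice : ∀ x : ℝ, volume (Prod.mk x ⁻¹'
      {ab : ℝ × ℝ | ab.1 + z ≤ ab.2 ∧ 0 ≤ ab.1 ∧ ab.1 ≤ 3*z ∧ 0 ≤ ab.2 ∧ ab.2 ≤ 3*z})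
      = (Set.Icc (0:ℝ) (3*z)).indicator (fun x => ENNReal.ofReal (2*z - x)) x := by
    intro x
    by_cases hx : x ∈ Set.Icc (0:ℝ) (3*z)
    · have : Prod.mk x ⁻¹' {ab : ℝ × ℝ | ab.1 + z ≤ ab.2 ∧ 0 ≤ ab.1 ∧ ab.1 ≤ 3*z ∧ 0 ≤ ab.2 ∧ ab.2 ≤ 3*z}
          = Set.Icc (x + z) (3*z) := by
        ext b
        simp only [Set.mem_preimage, Set.mem_setOf_eq, Set.mem_Icc]
        constructor
        · rintro ⟨h1, _, _, _, h5⟩; exact ⟨h1, h5⟩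
        · rintro ⟨h1, h2⟩
          exact ⟨h1, hx.1, hx.2, le_trans (by linarith [hx.1, hz.le]) h1, h2⟩
      rw [this, Real.volume_Icc, Set.indicator_of_mem hx]
      congr 1; ring
    · have : Prod.mk x ⁻¹' {ab : ℝ × ℝ | ab.1 + z ≤ ab.2 ∧ 0 ≤ ab.1 ∧ ab.1 ≤ 3*z ∧ 0 ≤ ab.2 ∧ ab.2 ≤ 3*z}
          = (∅ : Set ℝ) := by
        ext b
        simp only [Set.mem_preimage, Set.mem_setOf_eq, Set.mem_empty_iff_false, iff_false]
        rintro ⟨_, h2, h3, _, _⟩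
        exact hx ⟨h2, h3⟩
      rw [this, Set.indicator_of_notMem hx, measure_empty]
  simp_rw [hslice]
  rw [lintegral_indicator measurableSet_Icc]
  have hsplit : Set.Icc (0:ℝ) (3*z) = Set.Icc 0 (2*z) ∪ Set.Ioc (2*z) (3*z) :=
    (Set.Icc_union_Ioc_eq_Icc (by linarith) (by linarith)).symm
  rw [hsplit, lintegral_union measurableSet_Ioc
    ((Set.Iic_disjoint_Ioc le_rfl).mono_left Set.Icc_subset_Iic_self)]
  have h2 : ∫⁻ x in Set.Ioc (2*z) (3*z), ENNReal.ofReal (2*z - x) = 0 := by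
    rw [setLIntegral_congr_fun measurableSet_Ioc
      (fun x hx => ?_), lintegral_zero]
    show ENNReal.ofReal (2*z - x) = 0
    exact ENNReal.ofReal_eq_zero.2 (by linarith [hx.1])
  rw [h2, add_zero]
  have h1 : ∫⁻ x in Set.Icc 0 (2*z), ENNReal.ofReal (2*z - x)
      = ENNReal.ofReal (∫ x in Set.Icc 0 (2*z), (2*z - x)) := by
    rw [ofReal_integral_eq_lintegral_ofReal]
    · exact (Continuous.integrableOn_Icc (by fun_prop))
    · exact ae_restrict_of_forall_mem measurableSet_Icc
        (fun x hx => by simp only [Pi.zero_apply]; linarith [hx.2])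
  rw [h1]
  congr 1
  rw [MeasureTheory.integral_Icc_eq_integral_Ioc, ← intervalIntegral.integral_of_le (by linarith),
    intervalIntegral.integral_sub intervalIntegrable_const intervalIntegral.intervalIntegrable_id,
    intervalIntegral.integral_const, integral_id]
  simp; ring

lemma Tset_vol_aux (z : ℝ) (hz : 0 < z) :
    volume {p : Fin 2 → ℝ | p 0 + z ≤ p 1 ∧ ∀ i, 0 ≤ p i ∧ p i ≤ 3*z}
      = ENNReal.ofReal (2*z^2) := by
  have hpre : {p : Fin 2 → ℝ | p 0 + z ≤ p 1 ∧ ∀ i, 0 ≤ p i ∧ p i ≤ 3*z}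
      = (MeasurableEquiv.finTwoArrow : (Fin 2 → ℝ) ≃ᵐ ℝ × ℝ) ⁻¹'
        {ab : ℝ × ℝ | ab.1 + z ≤ ab.2 ∧ 0 ≤ ab.1 ∧ ab.1 ≤ 3*z ∧ 0 ≤ ab.2 ∧ ab.2 ≤ 3*z} := by
    ext p
    simp [MeasurableEquiv.finTwoArrow, Fin.forall_fin_two, and_assoc]
  rw [hpre, (volume_preserving_finTwoArrow ℝ).measure_preimage (by
    apply MeasurableSet.nullMeasurableSet
    apply IsClosed.measurableSet
    exact (isClosed_le (continuous_fst.add continuous_const) continuous_snd).inter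
      ((isClosed_le continuous_const continuous_fst).inter
      ((isClosed_le continuous_fst continuous_const).inter
      ((isClosed_le continuous_const continuous_snd).inter
      (isClosed_le continuous_snd continuous_const))))), tri_vol_aux z hz]

lemma softmax_bound_aux (z : ℝ) (p : Fin 2 → ℝ) (hp : p 0 + z ≤ p 1) :
    0 ≤ softmax p 0 ∧ softmax p 0 ≤ Real.exp (-z) ∧ softmax p 1 - 1 = -(softmax p 0) := by
  have hsum : ∑ l, Real.exp (p l) = Real.exp (p 0) + Real.exp (p 1) := by
    simp [Fin.sum_univ_two]
  have hS : 0 < Real.exp (p 0) + Real.exp (p 1) := by positivity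
  refine ⟨?_, ?_, ?_⟩
  · unfold softmax; rw [hsum]; positivity
  · unfold softmax; rw [hsum]
    have h1 : Real.exp (p 0) / (Real.exp (p 0) + Real.exp (p 1)) ≤ Real.exp (p 0) / Real.exp (p 1) := by
      apply div_le_div_of_nonneg_left (Real.exp_pos _).le (Real.exp_pos _) ?_
      · linarith [(Real.exp_pos (p 0)).le]
    calc Real.exp (p 0) / (Real.exp (p 0) + Real.exp (p 1)) ≤ Real.exp (p 0) / Real.exp (p 1) := h1
      _ = Real.exp (p 0 - p 1) := by rw [Real.exp_sub]
      _ ≤ Real.exp (-z) := Real.exp_le_exp.2 (by linarith)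
  · unfold softmax; rw [hsum]; field_simp; ring

lemma dist_bound_aux (z : ℝ) (u : (Fin 2 → ℝ) × (Fin 2 → ℝ))
    (h1 : u.1 0 + z ≤ u.1 1) (h2 : u.2 0 + z ≤ u.2 1) :
    dist2 (G u) (![0,1], ![0,1]) ≤ 2 * Real.exp (-z) := by
  obtain ⟨hx0, hxb, hx1⟩ := softmax_bound_aux z u.1 h1
  obtain ⟨hy0, hyb, hy1⟩ := softmax_bound_aux z u.2 h2
  unfold dist2 G
  simp only [Fin.sum_univ_two, Matrix.cons_val_zero, Matrix.cons_val_one, Matrix.head_cons]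
  have key : (softmax u.1 0 - 0)^2 + (softmax u.1 1 - 1)^2
      + ((softmax u.2 0 - 0)^2 + (softmax u.2 1 - 1)^2) ≤ (2*Real.exp (-z))^2 := by
    have e1 : softmax u.1 0 ^ 2 ≤ Real.exp (-z)^2 := pow_le_pow_left₀ hx0 hxb 2
    have e2 : softmax u.2 0 ^ 2 ≤ Real.exp (-z)^2 := pow_le_pow_left₀ hy0 hyb 2
    rw [sub_eq_iff_eq_add] at hx1 hy1
    rw [hx1, hy1]
    ring_nf
    nlinarith [Real.exp_pos (-z)]
  calc Real.sqrt ((softmax u.1 0 - 0)^2 + (softmax u.1 1 - 1)^2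
        + ((softmax u.2 0 - 0)^2 + (softmax u.2 1 - 1)^2))
      ≤ Real.sqrt ((2*Real.exp (-z))^2) := Real.sqrt_le_sqrt key
    _ = 2*Real.exp (-z) := Real.sqrt_sq (by positivity)

end AuxProofs

/-- Dual volume expansion does not imply primal instability. -/
theorem dual_expansion_not_primal_instability
    (S : ℝ → Set ((Fin 2 → ℝ) × (Fin 2 → ℝ)))
    (hS : ∀ z : ℝ, S z = {pq | pq.1 0 + z ≤ pq.1 1 ∧ pq.2 0 + z ≤ pq.2 1 ∧
      (∀ i, 0 ≤ pq.1 i ∧ pq.1 i ≤ 3 * z) ∧ (∀ i, 0 ≤ pq.2 i ∧ pq.2 i ≤ 3 * z)}) :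
    (∀ z : ℝ, 0 < z → volume (S z) = ENNReal.ofReal (4 * z^4)) ∧
    Tendsto (fun z : ℝ => volume (S z)) atTop (nhds ⊤) ∧
    Tendsto (fun z : ℝ =>
        sSup {d : ℝ | ∃ u ∈ S z, d = dist2 (G u) (![0, 1], ![0, 1])})
      atTop (nhds 0) := by
  have hvol : ∀ z : ℝ, 0 < z → volume (S z) = ENNReal.ofReal (4 * z^4) := by
    intro z hz
    have hset : S z = {p : Fin 2 → ℝ | p 0 + z ≤ p 1 ∧ ∀ i, 0 ≤ p i ∧ p i ≤ 3*z} ×ˢ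
        {p : Fin 2 → ℝ | p 0 + z ≤ p 1 ∧ ∀ i, 0 ≤ p i ∧ p i ≤ 3*z} := by
      rw [hS z]; ext pq
      simp only [Set.mem_setOf_eq, Set.mem_prod]
      tauto
    rw [hset, MeasureTheory.Measure.volume_eq_prod, Measure.prod_prod,
      Tset_vol_aux z hz, ← ENNReal.ofReal_mul (by positivity)]
    congr 1; ring
  have hwit : ∀ z : ℝ, 0 < z → (![0,z], ![0,z]) ∈ S z := by
    intro z hz
    rw [hS z]
    refine ⟨by simp, by simp, ?_, ?_⟩ <;>
      · intro i
        fin_cases i <;> constructor <;> simp <;> linarith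
  have hbound : ∀ z : ℝ, ∀ d ∈ {d : ℝ | ∃ u ∈ S z, d = dist2 (G u) (![0,1], ![0,1])},
      d ≤ 2 * Real.exp (-z) := by
    intro z d hd
    obtain ⟨u, hu, rfl⟩ := hd
    rw [hS z] at hu
    exact dist_bound_aux z u hu.1 hu.2.1
  refine ⟨hvol, ?_, ?_⟩
  · apply Tendsto.congr' ((eventually_gt_atTop 0).mono (fun z hz => (hvol z hz).symm))
    apply ENNReal.tendsto_ofReal_atTop.comp
    exact (tendsto_pow_atTop (by norm_num)).const_mul_atTop (by norm_num)
  · have hexp : Tendsto (fun z : ℝ => 2 * Real.exp (-z)) atTop (nhds 0) := by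
      simpa using Real.tendsto_exp_neg_atTop_nhds_zero.const_mul 2
    apply tendsto_of_tendsto_of_tendsto_of_le_of_le' tendsto_const_nhds hexp
    · filter_upwards [eventually_gt_atTop (0:ℝ)] with z hz
      have hmem : dist2 (G (![0,z], ![0,z])) (![0,1], ![0,1])
          ∈ {d : ℝ | ∃ u ∈ S z, d = dist2 (G u) (![0,1], ![0,1])} :=
        ⟨(![0,z], ![0,z]), hwit z hz, rfl⟩
      have hbdd : BddAbove {d : ℝ | ∃ u ∈ S z, d = dist2 (G u) (![0,1], ![0,1])} :=
        ⟨2 * Real.exp (-z), fun d hd => hbound z d hd⟩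
      exact le_trans (Real.sqrt_nonneg _) (le_csSup hbdd hmem)
    · filter_upwards [eventually_gt_atTop (0:ℝ)] with z hz
      exact csSup_le ⟨_, ⟨(![0,z], ![0,z]), hwit z hz, rfl⟩⟩ (fun d hd => hbound z d hd)
end

section
/- For z > 0, define the set S(z) = { (r_1, r_2, s_1, s_2) in R^4 : z <= r_1 <= 2z, z <= s_1 <= 2z, -2z <= r_2 <= -z, -2z <= s_2 <= -z } in the reduced dual space. Then the Lebesgue volume of S(z) equals z^4, which tends to infinity as z tends to infinity, while the primal image H(S(z)) converges to the single point ((1,0,0),(1,0,0)): the supremum over points of S(z) of the l2 distance between their image under H and ((1,0,0),(1,0,0)) tends to 0 as z tends to infinity. Hence, in the reduced dual space as well, volume expansion does not imply instability in the primal space. -/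
open MeasureTheory Filter

/-- The conversion from the reduced dual space (of Eshel and Akin) to the primal space,
for n = m = 3: H(r,s) = (x,y) with x ∝ (exp r₁, exp r₂, 1) and y ∝ (exp s₁, exp s₂, 1). -/
noncomputable def reducedConv (rs : (Fin 2 → ℝ) × (Fin 2 → ℝ)) :
    (Fin 3 → ℝ) × (Fin 3 → ℝ) :=
  (softmax ![rs.1 0, rs.1 1, 0], softmax ![rs.2 0, rs.2 1, 0])

lemma softmax_sq_bound (z a b : ℝ) (hz : 0 ≤ z) (ha : z ≤ a) (hb : b ≤ -z) :
    (softmax ![a, b, 0] 0 - 1)^2 + (softmax ![a, b, 0] 1)^2 + (softmax ![a, b, 0] 2)^2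
      ≤ 6 * Real.exp (-z)^2 := by
  have hsum : ∑ l, Real.exp (![a, b, 0] l) = Real.exp a + Real.exp b + 1 := by
    simp [Fin.sum_univ_three]
  set E := Real.exp (-z) with hE
  set ea := Real.exp a with hea
  set eb := Real.exp b with heb
  set Ssum := ea + eb + 1 with hSsum
  have hEpos : 0 < E := Real.exp_pos _
  have heapos : 0 < ea := Real.exp_pos _
  have hebpos : 0 < eb := Real.exp_pos _
  have hSpos : 0 < Ssum := by positivity
  have hzea : Real.exp z ≤ ea := Real.exp_le_exp.2 ha
  have h1z : (1:ℝ) ≤ Real.exp z := Real.one_le_exp hz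
  have hebE : eb ≤ E := Real.exp_le_exp.2 hb
  have hE1 : E ≤ 1 := Real.exp_le_one_iff.2 (by linarith)
  have hEz : E * Real.exp z = 1 := by
    rw [hE, ← Real.exp_add]; simp
  have hS1 : (1:ℝ) ≤ Ssum := by nlinarith
  have hSz : Real.exp z ≤ Ssum := by nlinarith
  have hx0 : softmax ![a, b, 0] 0 = ea / Ssum := by
    simp only [softmax, hsum]; simp; rfl
  have hx1 : softmax ![a, b, 0] 1 = eb / Ssum := by
    simp only [softmax, hsum]; simp; rfl
  have hx2 : softmax ![a, b, 0] 2 = 1 / Ssum := by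
    simp only [softmax, hsum]; simp
  rw [hx0, hx1, hx2]
  have h0 : ea / Ssum - 1 = -((eb + 1) / Ssum) := by
    field_simp
    rw [hSsum]; ring
  have hb0 : (eb + 1) / Ssum ≤ 2 * E := by
    rw [div_le_iff₀ hSpos]
    nlinarith [mul_le_mul_of_nonneg_left hSz hEpos.le]
  have hb0' : 0 ≤ (eb + 1) / Ssum := by positivity
  have hb1 : eb / Ssum ≤ E := le_trans (div_le_self hebpos.le hS1) hebE
  have hb1' : 0 ≤ eb / Ssum := by positivity
  have hb2 : 1 / Ssum ≤ E := by
    rw [div_le_iff₀ hSpos]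
    nlinarith [mul_le_mul_of_nonneg_left hSz hEpos.le]
  have hb2' : 0 ≤ 1 / Ssum := by positivity
  have hq0 : (ea / Ssum - 1)^2 ≤ 4 * E^2 := by
    rw [h0, neg_sq]
    nlinarith
  nlinarith [sq_nonneg (eb / Ssum), sq_nonneg (1 / Ssum)]

lemma dist2_bound (z : ℝ) (hz : 0 ≤ z) (u : (Fin 2 → ℝ) × (Fin 2 → ℝ))
    (h1 : z ≤ u.1 0) (h2 : u.1 1 ≤ -z) (h3 : z ≤ u.2 0) (h4 : u.2 1 ≤ -z) :
    dist2 (reducedConv u) (![1, 0, 0], ![1, 0, 0]) ≤ 4 * Real.exp (-z) := by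
  have hx := softmax_sq_bound z (u.1 0) (u.1 1) hz h1 h2
  have hy := softmax_sq_bound z (u.2 0) (u.2 1) hz h3 h4
  have hEpos : (0:ℝ) < Real.exp (-z) := Real.exp_pos _
  unfold dist2 reducedConv
  simp only [Fin.sum_univ_three]
  have key : (softmax ![u.1 0, u.1 1, 0] 0 - ![(1:ℝ), 0, 0] 0)^2
      + (softmax ![u.1 0, u.1 1, 0] 1 - ![(1:ℝ), 0, 0] 1)^2
      + (softmax ![u.1 0, u.1 1, 0] 2 - ![(1:ℝ), 0, 0] 2)^2
      + ((softmax ![u.2 0, u.2 1, 0] 0 - ![(1:ℝ), 0, 0] 0)^2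
      + (softmax ![u.2 0, u.2 1, 0] 1 - ![(1:ℝ), 0, 0] 1)^2
      + (softmax ![u.2 0, u.2 1, 0] 2 - ![(1:ℝ), 0, 0] 2)^2)
      ≤ (4 * Real.exp (-z))^2 := by
    simp only [Matrix.cons_val_zero, Matrix.cons_val_one, Matrix.head_cons,
      Matrix.cons_val_two, Matrix.tail_cons, sub_zero]
    nlinarith
  calc Real.sqrt _ ≤ Real.sqrt ((4 * Real.exp (-z))^2) := Real.sqrt_le_sqrt (by linarith [key])
    _ = 4 * Real.exp (-z) := Real.sqrt_sq (by positivity)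

/-- In the reduced dual space as well, volume expansion does not imply
primal instability. -/
theorem reduced_dual_expansion_not_primal_instability
    (S : ℝ → Set ((Fin 2 → ℝ) × (Fin 2 → ℝ)))
    (hS : ∀ z : ℝ, S z = {rs |
      z ≤ rs.1 0 ∧ rs.1 0 ≤ 2 * z ∧ z ≤ rs.2 0 ∧ rs.2 0 ≤ 2 * z ∧
      -(2 * z) ≤ rs.1 1 ∧ rs.1 1 ≤ -z ∧ -(2 * z) ≤ rs.2 1 ∧ rs.2 1 ≤ -z}) :
    (∀ z : ℝ, 0 < z → volume (S z) = ENNReal.ofReal (z^4)) ∧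
    Tendsto (fun z : ℝ => volume (S z)) atTop (nhds ⊤) ∧
    Tendsto (fun z : ℝ =>
        sSup {d : ℝ | ∃ u ∈ S z, d = dist2 (reducedConv u) (![1, 0, 0], ![1, 0, 0])})
      atTop (nhds 0) := by
  have hvol : ∀ z : ℝ, 0 < z → volume (S z) = ENNReal.ofReal (z^4) := by
    intro z hz
    have hset : S z = (Set.univ.pi ![Set.Icc z (2*z), Set.Icc (-(2*z)) (-z)]) ×ˢ
        (Set.univ.pi ![Set.Icc z (2*z), Set.Icc (-(2*z)) (-z)]) := by
      rw [hS]
      ext rs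
      simp only [Set.mem_setOf_eq, Set.mem_prod, Set.mem_pi, Set.mem_univ, forall_true_left,
        Fin.forall_fin_two, Matrix.cons_val_zero, Matrix.cons_val_one, Matrix.head_cons,
        Set.mem_Icc]
      tauto
    have hIcc1 : volume (Set.Icc z (2*z)) = ENNReal.ofReal z := by
      rw [Real.volume_Icc]; congr 1; ring
    have hIcc2 : volume (Set.Icc (-(2*z)) (-z)) = ENNReal.ofReal z := by
      rw [Real.volume_Icc]; congr 1; ring
    rw [hset, Measure.volume_eq_prod, Measure.prod_prod, volume_pi_pi, Fin.prod_univ_two]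
    simp only [Matrix.cons_val_zero, Matrix.cons_val_one, Matrix.head_cons, hIcc1, hIcc2]
    rw [← ENNReal.ofReal_mul hz.le, ← ENNReal.ofReal_mul (by positivity)]
    congr 1; ring
  refine ⟨hvol, ?_, ?_⟩
  · have h1 : Tendsto (fun z : ℝ => ENNReal.ofReal (z^4)) atTop (nhds ⊤) :=
      ENNReal.tendsto_ofReal_atTop.comp (tendsto_pow_atTop (by norm_num))
    refine h1.congr' ?_
    filter_upwards [eventually_gt_atTop (0:ℝ)] with z hz
    exact (hvol z hz).symm
  · have hupper : ∀ z : ℝ, 0 ≤ z →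
        sSup {d : ℝ | ∃ u ∈ S z, d = dist2 (reducedConv u) (![1, 0, 0], ![1, 0, 0])}
          ≤ 4 * Real.exp (-z) := by
      intro z hz
      apply Real.sSup_le
      · rintro d ⟨u, hu, rfl⟩
        rw [hS] at hu
        obtain ⟨a1, a2, a3, a4, a5, a6, a7, a8⟩ := hu
        exact dist2_bound z hz u a1 a6 a3 a8
      · positivity
    have hlower : ∀ z : ℝ, 0 ≤ z →
        0 ≤ sSup {d : ℝ | ∃ u ∈ S z, d = dist2 (reducedConv u) (![1, 0, 0], ![1, 0, 0])} := by
      intro z hz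
      have hmem : dist2 (reducedConv (![z, -z], ![z, -z])) (![1, 0, 0], ![1, 0, 0]) ∈
          {d : ℝ | ∃ u ∈ S z, d = dist2 (reducedConv u) (![1, 0, 0], ![1, 0, 0])} := by
        refine ⟨(![z, -z], ![z, -z]), ?_, rfl⟩
        rw [hS]
        simp only [Set.mem_setOf_eq, Matrix.cons_val_zero, Matrix.cons_val_one, Matrix.head_cons]
        refine ⟨le_refl z, by linarith, le_refl z, by linarith, by linarith, le_refl _,
          by linarith, le_refl _⟩
      have hbdd : BddAbove {d : ℝ | ∃ u ∈ S z, d = dist2 (reducedConv u) (![1, 0, 0], ![1, 0, 0])} := by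
        refine ⟨4 * Real.exp (-z), ?_⟩
        rintro d ⟨u, hu, rfl⟩
        rw [hS] at hu
        obtain ⟨a1, a2, a3, a4, a5, a6, a7, a8⟩ := hu
        exact dist2_bound z hz u a1 a6 a3 a8
      exact le_trans (Real.sqrt_nonneg _) (le_csSup hbdd hmem)
    have h4 : Tendsto (fun z : ℝ => 4 * Real.exp (-z)) atTop (nhds 0) := by
      have := Real.tendsto_exp_neg_atTop_nhds_zero.const_mul (4:ℝ)
      simpa using this
    refine tendsto_of_tendsto_of_tendsto_of_le_of_le' tendsto_const_nhds h4 ?_ ?_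
    · filter_upwards [eventually_ge_atTop (0:ℝ)] with z hz using hlower z hz
    · filter_upwards [eventually_ge_atTop (0:ℝ)] with z hz using hupper z hz
end

section
/- Let (A,-A) be a two-person zero-sum game and (x,y) in Delta = Delta^n x Delta^m. Define Z_{jk} := A_{jk} - [A y]_j - [A^T x]_k and Zbar := sum_{j in S1} sum_{k in S2} x_j y_k Z_{jk}. Then C_{(A,-A)}(x,y) = sum_{j in S1} sum_{k in S2} x_j y_k (Z_{jk} - Zbar)^2; that is, C_{(A,-A)}(x,y) equals the variance of the random variable taking value Z_{jk} with probability x_j y_k. In particular, C_{(A,-A)}(x,y) >= 0 for every (x,y) in Delta. -/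
open MeasureTheory Filter

/-- In zero-sum games, C_{(A,-A)}(x,y) is the variance of Z_{jk} under
the product distribution x ⊗ y; in particular it is nonnegative. -/
theorem Cfun_zerosum_eq_variance
    (n m : ℕ) (hn : 2 ≤ n) (hm : 2 ≤ m)
    (A : Matrix (Fin n) (Fin m) ℝ)
    (x : Fin n → ℝ) (hx : x ∈ stdSimplex ℝ (Fin n))
    (y : Fin m → ℝ) (hy : y ∈ stdSimplex ℝ (Fin m))
    (Z : Fin n → Fin m → ℝ)
    (hZ : ∀ j k, Z j k = A j k - A.mulVec y j - A.transpose.mulVec x k)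
    (Zbar : ℝ) (hZbar : Zbar = ∑ j, ∑ k, x j * y k * Z j k) :
    Cfun A (-A) x y = ∑ j, ∑ k, x j * y k * (Z j k - Zbar)^2 ∧
    0 ≤ Cfun A (-A) x y := by
    classical
  obtain ⟨hx0, hx1⟩ := hx
  obtain ⟨hy0, hy1⟩ := hy
  set a : Fin n → ℝ := A.mulVec y with ha
  set b : Fin m → ℝ := A.transpose.mulVec x with hb
  set v : ℝ := ∑ j, ∑ k, x j * y k * A j k with hv
  have haj : ∀ j, a j = ∑ k, A j k * y k := fun j => by
    simp [ha, Matrix.mulVec, dotProduct]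
  have hbk : ∀ k, b k = ∑ j, A j k * x j := fun k => by
    simp [hb, Matrix.mulVec, dotProduct, Matrix.transpose_apply]
  have hxa : ∑ j, x j * a j = v := by
    rw [hv]
    refine Finset.sum_congr rfl fun j _ => ?_
    rw [haj, Finset.mul_sum]
    exact Finset.sum_congr rfl fun k _ => by ring
  have hyb : ∑ k, y k * b k = v := by
    rw [hv, Finset.sum_comm]
    refine Finset.sum_congr rfl fun k _ => ?_
    rw [hbk, Finset.mul_sum]
    exact Finset.sum_congr rfl fun j _ => by ring
  set E2 : ℝ := ∑ j, ∑ k, x j * y k * A j k * A j k with hE2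
  set Sa : ℝ := ∑ j, x j * a j * a j with hSa
  set Sb : ℝ := ∑ k, y k * b k * b k with hSb
  -- monomial moment lemmas
  have hAa : (∑ j, ∑ k, x j * y k * (A j k * a j)) = Sa := by
    refine Finset.sum_congr rfl fun j _ => ?_
    calc ∑ k, x j * y k * (A j k * a j)
        = (x j * a j) * ∑ k, A j k * y k := by
          rw [Finset.mul_sum]; exact Finset.sum_congr rfl fun k _ => by ring
      _ = x j * a j * a j := by rw [← haj]
  have hAb : (∑ j, ∑ k, x j * y k * (A j k * b k)) = Sb := by
    rw [Finset.sum_comm]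
    refine Finset.sum_congr rfl fun k _ => ?_
    calc ∑ j, x j * y k * (A j k * b k)
        = (y k * b k) * ∑ j, A j k * x j := by
          rw [Finset.mul_sum]; exact Finset.sum_congr rfl fun j _ => by ring
      _ = y k * b k * b k := by rw [← hbk]
  have hab : (∑ j, ∑ k, x j * y k * (a j * b k)) = v * v := by
    calc (∑ j, ∑ k, x j * y k * (a j * b k))
        = ∑ j, (x j * a j) * ∑ k, y k * b k := by
          refine Finset.sum_congr rfl fun j _ => ?_
          rw [Finset.mul_sum]; exact Finset.sum_congr rfl fun k _ => by ring
      _ = (∑ j, x j * a j) * v := by rw [hyb, ← Finset.sum_mul]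
      _ = v * v := by rw [hxa]
  have haa : (∑ j, ∑ k, x j * y k * (a j * a j)) = Sa := by
    refine Finset.sum_congr rfl fun j _ => ?_
    calc ∑ k, x j * y k * (a j * a j)
        = (x j * a j * a j) * ∑ k, y k := by
          rw [Finset.mul_sum]; exact Finset.sum_congr rfl fun k _ => by ring
      _ = x j * a j * a j := by rw [hy1, mul_one]
  have hbb : (∑ j, ∑ k, x j * y k * (b k * b k)) = Sb := by
    rw [Finset.sum_comm]
    refine Finset.sum_congr rfl fun k _ => ?_
    calc ∑ j, x j * y k * (b k * b k)
        = (y k * b k * b k) * ∑ j, x j := by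
          rw [Finset.mul_sum]; exact Finset.sum_congr rfl fun j _ => by ring
      _ = y k * b k * b k := by rw [hx1, mul_one]
  have ha1 : (∑ j, ∑ k, x j * y k * a j) = v := by
    rw [← hxa]
    refine Finset.sum_congr rfl fun j _ => ?_
    calc ∑ k, x j * y k * a j
        = (x j * a j) * ∑ k, y k := by
          rw [Finset.mul_sum]; exact Finset.sum_congr rfl fun k _ => by ring
      _ = x j * a j := by rw [hy1, mul_one]
  have hb1 : (∑ j, ∑ k, x j * y k * b k) = v := by
    rw [← hyb, Finset.sum_comm]
    refine Finset.sum_congr rfl fun k _ => ?_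
    calc ∑ j, x j * y k * b k
        = (y k * b k) * ∑ j, x j := by
          rw [Finset.mul_sum]; exact Finset.sum_congr rfl fun j _ => by ring
      _ = y k * b k := by rw [hx1, mul_one]
  have h11 : (∑ j, ∑ k, x j * y k) = 1 := by
    rw [← hx1]
    refine Finset.sum_congr rfl fun j _ => ?_
    rw [← Finset.mul_sum, hy1, mul_one]
  -- Cfun in terms of moments
  have hnb : ∀ k, (-A).transpose.mulVec x k = -(b k) := by
    intro k
    rw [hb]
    simp [Matrix.transpose_neg, Matrix.neg_mulVec]
  have hC : Cfun A (-A) x y = E2 - Sb - Sa + v * v := by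
    unfold Cfun
    have step : (∑ j, ∑ k, x j * y k * (A j k - A.mulVec y j) *
        ((-A) j k - (-A).transpose.mulVec x k))
        = ∑ j, ∑ k, -(x j * y k * A j k * A j k - x j * y k * (A j k * b k)
            - x j * y k * (A j k * a j) + x j * y k * (a j * b k)) := by
      refine Finset.sum_congr rfl fun j _ => ?_
      refine Finset.sum_congr rfl fun k _ => ?_
      rw [hnb k, ← ha]
      simp only [Matrix.neg_apply]
      ring
    rw [step]
    simp only [Finset.sum_neg_distrib, Finset.sum_add_distrib, Finset.sum_sub_distrib,
      hAb, hAa, hab, ← hE2]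
    ring
  -- Zbar = -v
  have hZbar2 : Zbar = -v := by
    have hZ' : (∑ j, ∑ k, x j * y k * Z j k)
        = ∑ j, ∑ k, (x j * y k * A j k - x j * y k * a j - x j * y k * b k) := by
      refine Finset.sum_congr rfl fun j _ => ?_
      refine Finset.sum_congr rfl fun k _ => ?_
      rw [hZ j k]
      ring
    rw [hZbar, hZ']
    simp only [Finset.sum_sub_distrib, ha1, hb1, ← hv]
    ring
  -- variance expression in terms of moments
  have hV : (∑ j, ∑ k, x j * y k * (Z j k - Zbar)^2) = E2 - Sb - Sa + v * v := by
    have step : (∑ j, ∑ k, x j * y k * (Z j k - Zbar)^2)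
        = ∑ j, ∑ k, (x j * y k * A j k * A j k
            + x j * y k * (a j * a j)
            + x j * y k * (b k * b k)
            + v * v * (x j * y k)
            - 2 * (x j * y k * (A j k * a j))
            - 2 * (x j * y k * (A j k * b k))
            + 2 * v * (x j * y k * A j k)
            + 2 * (x j * y k * (a j * b k))
            - 2 * v * (x j * y k * a j)
            - 2 * v * (x j * y k * b k)) := by
      refine Finset.sum_congr rfl fun j _ => ?_
      refine Finset.sum_congr rfl fun k _ => ?_
      rw [hZ j k, hZbar2]
      ring
    rw [step]
    simp only [Finset.sum_add_distrib, Finset.sum_sub_distrib, ← Finset.mul_sum,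
      hAa, hAb, hab, haa, hbb, ha1, hb1, h11, ← hE2, ← hv]
    simp only [hy1, mul_one, hx1]
    ring
  have heq : Cfun A (-A) x y = ∑ j, ∑ k, x j * y k * (Z j k - Zbar)^2 := by
    rw [hC, hV]
  refine ⟨heq, ?_⟩
  rw [heq]
  refine Finset.sum_nonneg fun j _ => Finset.sum_nonneg fun k _ => ?_
  have := hx0 j
  have := hy0 k
  positivity
end
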